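/- With the notation of the previous dilation construction (Ẑ = [[Z, H₀],[0, W*]], Ŵ = [[W, −H₀*],[0, Z*]] built from (Z,W) in the quantum conservative hyperbola of type r), the operator Û := (r/(r+1/r))·(Ẑ + Ŵ*) on H ⊕ H is unitary. -/

import Mathlib

open ContinuousLinearMap

variable {H : Type*} [NormedAddCommGroup H] [InnerProductSpace ℂ H] [CompleteSpace H]

/-- The block operator `[[A, B],[C, D]]` acting on the Hilbert-space direct sum
`H ⊕ H = WithLp 2 (H × H)`. -/
noncomputable def blockOp (A B C D : H →L[ℂ] H) :
    WithLp 2 (H × H) →L[ℂ] WithLp 2 (H × H) :=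
  ((WithLp.prodContinuousLinearEquiv 2 ℂ H H).symm : H × H →L[ℂ] WithLp 2 (H × H)) ∘L
    ((A ∘L fst ℂ H H + B ∘L snd ℂ H H).prod (C ∘L fst ℂ H H + D ∘L snd ℂ H H)) ∘L
    ((WithLp.prodContinuousLinearEquiv 2 ℂ H H) : WithLp 2 (H × H) →L[ℂ] H × H)

set_option linter.unusedSectionVars false in
@[simp] lemma blockOp_apply_fst (A B C D : H →L[ℂ] H) (x : WithLp 2 (H × H)) :
    (blockOp A B C D x).fst = A x.fst + B x.snd := rfl

set_option linter.unusedSectionVars false in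
@[simp] lemma blockOp_apply_snd (A B C D : H →L[ℂ] H) (x : WithLp 2 (H × H)) :
    (blockOp A B C D x).snd = C x.fst + D x.snd := rfl

set_option linter.unusedSectionVars false in
lemma blockOp_mul (A B C D A' B' C' D' : H →L[ℂ] H) :
    blockOp A B C D * blockOp A' B' C' D' =
      blockOp (A*A'+B*C') (A*B'+B*D') (C*A'+D*C') (C*B'+D*D') := by
  ext x
  refine WithLp.ofLp_injective 2 (Prod.ext (?_ : WithLp.fst _ = WithLp.fst _) (?_ : WithLp.snd _ = WithLp.snd _)) <;>
    simp [mul_apply, ContinuousLinearMap.add_apply, map_add] <;> abel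

set_option linter.unusedSectionVars false in
lemma blockOp_add (A B C D A' B' C' D' : H →L[ℂ] H) :
    blockOp A B C D + blockOp A' B' C' D' = blockOp (A+A') (B+B') (C+C') (D+D') := by
  ext x
  refine WithLp.ofLp_injective 2 (Prod.ext (?_ : WithLp.fst _ = WithLp.fst _) (?_ : WithLp.snd _ = WithLp.snd _)) <;>
    simp [ContinuousLinearMap.add_apply] <;> abel

set_option linter.unusedSectionVars false in
lemma blockOp_one : (1 : WithLp 2 (H × H) →L[ℂ] WithLp 2 (H × H)) = blockOp 1 0 0 1 := by
  ext x
  refine WithLp.ofLp_injective 2 (Prod.ext (?_ : WithLp.fst _ = WithLp.fst _) (?_ : WithLp.snd _ = WithLp.snd _)) <;> simp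

set_option linter.unusedSectionVars false in
lemma blockOp_smul (c : ℂ) (A B C D : H →L[ℂ] H) :
    c • blockOp A B C D = blockOp (c•A) (c•B) (c•C) (c•D) := by
  ext x
  refine WithLp.ofLp_injective 2 (Prod.ext (?_ : WithLp.fst _ = WithLp.fst _) (?_ : WithLp.snd _ = WithLp.snd _)) <;> simp

lemma blockOp_adjoint (A B C D : H →L[ℂ] H) :
    adjoint (blockOp A B C D) = blockOp (adjoint A) (adjoint C) (adjoint B) (adjoint D) := by
  symm
  rw [eq_adjoint_iff]
  intro x y
  rw [WithLp.prod_inner_apply, WithLp.prod_inner_apply]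
  change inner ℂ (WithLp.fst _) (WithLp.fst y) + inner ℂ (WithLp.snd _) (WithLp.snd y) =
    inner ℂ (WithLp.fst x) (WithLp.fst _) + inner ℂ (WithLp.snd x) (WithLp.snd _)
  simp only [WithLp.prod_inner_apply, blockOp_apply_fst, blockOp_apply_snd,
    inner_add_left, inner_add_right, adjoint_inner_left]
  ring

set_option maxHeartbeats 1000000 in
/-- With the dilation `Ẑ = [[Z, H₀],[0, W*]]`, `Ŵ = [[W, −H₀*],[0, Z*]]`
built from `(Z,W)` in the quantum conservative hyperbola of type `r > 1`
(polar data `Z = UA`, `Â = r⁻²A⁻¹`, `H₀ = U((1+r⁻²)²I − (A+Â)²)^{1/2}`), the operator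
`Û = (r/(r+1/r))(Ẑ + Ŵ*)` on `H ⊕ H` is unitary. -/
theorem stmt9 (r : ℝ) (hr : 1 < r) (Z W U A S : H →L[ℂ] H)
    (hZW : Z * W = (((r : ℂ)) ^ 2)⁻¹ • (1 : H →L[ℂ] H))
    (hWZ : W * Z = (((r : ℂ)) ^ 2)⁻¹ • (1 : H →L[ℂ] H))
    (hZ : ‖Z‖ < 1) (hW : ‖W‖ < 1)
    (hUl : adjoint U * U = 1) (hUr : U * adjoint U = 1)
    (hA : A.IsPositive) (hAunit : IsUnit A) (hpolar : Z = U * A)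
    (hpolarW : W = ((((r ^ 2)⁻¹ : ℝ) : ℂ) • Ring.inverse A) * adjoint U)
    (hS : S.IsPositive)
    (hSsq : S ^ 2 = (((1 + (r ^ 2)⁻¹) ^ 2 : ℝ) : ℂ) • (1 : H →L[ℂ] H)
      - (A + (((r ^ 2)⁻¹ : ℝ) : ℂ) • Ring.inverse A) ^ 2)
    (hSA : Commute S A) :
    ∀ Uhat : WithLp 2 (H × H) →L[ℂ] WithLp 2 (H × H),
      Uhat = ((r / (r + 1 / r) : ℝ) : ℂ) •
        (blockOp Z (U * S) 0 (adjoint W)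
          + adjoint (blockOp W (-(adjoint (U * S))) 0 (adjoint Z))) →
      adjoint Uhat * Uhat = 1 ∧ Uhat * adjoint Uhat = 1 := by
  intro Uhat hU
  have hr0 : (0:ℝ) < r := lt_trans one_pos hr
  have hrne : r ≠ 0 := ne_of_gt hr0
  have hden : r + 1/r ≠ 0 := by positivity
  set t : ℂ := (((r ^ 2)⁻¹ : ℝ) : ℂ) with ht
  set b : ℂ := (((1 + (r ^ 2)⁻¹) ^ 2 : ℝ) : ℂ) with hb
  set c : ℂ := ((r / (r + 1 / r) : ℝ) : ℂ) with hc
  set Ainv : H →L[ℂ] H := Ring.inverse A with hAinvdef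
  set B : H →L[ℂ] H := A + t • Ainv with hBdef
  set K : H →L[ℂ] H := U * S with hKdef
  set T : H →L[ℂ] H := Z + adjoint W with hTdef
  -- scalar facts
  have hcstar : star c = c := by simp [hc, Complex.star_def, Complex.conj_ofReal]
  have hcb : c * c * b = 1 := by
    have key : (r / (r + 1 / r)) ^ 2 * (1 + (r ^ 2)⁻¹) ^ 2 = 1 := by
      have h0 : r / (r + 1 / r) * (1 + (r ^ 2)⁻¹) = 1 := by
        field_simp
      rw [← mul_pow, h0, one_pow]
    have : c * c * b = (((r / (r + 1 / r)) ^ 2 * (1 + (r ^ 2)⁻¹) ^ 2 : ℝ) : ℂ) := by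
      rw [hc, hb]; push_cast; ring
    rw [this, key, Complex.ofReal_one]
  -- self-adjointness facts
  have hAsa : star A = A := hA.isSelfAdjoint.star_eq
  have hAinvsa : star Ainv = Ainv := by
    rw [hAinvdef, ← Ring.inverse_star, hAsa]
  have hSsa : star S = S := hS.isSelfAdjoint.star_eq
  have htstar : star t = t := by simp [ht, Complex.star_def, Complex.conj_ofReal]
  have hBsa : star B = B := by
    rw [hBdef, star_add, hAsa, star_smul, htstar, hAinvsa]
  -- adjoint of W
  have hWadj : adjoint W = U * (t • Ainv) := by
    rw [← star_eq_adjoint, hpolarW, star_mul, star_smul, htstar,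
      star_eq_adjoint (adjoint U), adjoint_adjoint, hAinvsa]
  have hT : T = U * B := by
    rw [hTdef, hpolar, hWadj, hBdef, mul_add]
  have hTadj : adjoint T = B * adjoint U := by
    rw [← star_eq_adjoint, hT, star_mul, hBsa, star_eq_adjoint]
  have hKadj : adjoint K = S * adjoint U := by
    rw [← star_eq_adjoint, hKdef, star_mul, hSsa, star_eq_adjoint]
  -- commutation
  have hSAinv : Commute S Ainv := by
    have hu : (hAunit.unit : H →L[ℂ] H) = A := hAunit.unit_spec
    have h1 : Commute S (hAunit.unit : H →L[ℂ] H) := by rw [hu]; exact hSA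
    have h2 := h1.units_inv_right
    rwa [← Ring.inverse_unit hAunit.unit, hu, ← hAinvdef] at h2
  have hSB : Commute S B := by
    rw [hBdef]
    exact hSA.add_right (hSAinv.smul_right t)
  -- main operator identity
  have hB2S2 : B * B + S * S = b • 1 := by
    rw [← pow_two, ← pow_two, hSsq]
    abel
  -- useful sandwich lemmas
  have hUlm : ∀ X Y : H →L[ℂ] H, (X * adjoint U) * (U * Y) = X * Y := by
    intro X Y
    rw [mul_assoc, ← mul_assoc (adjoint U), hUl, one_mul]
  have hUrm : ∀ X Y : H →L[ℂ] H, (U * X) * (Y * adjoint U) = U * (X * Y) * adjoint U := by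
    intro X Y
    rw [mul_assoc, mul_assoc, mul_assoc]
  -- rewrite Uhat
  have hM : blockOp Z (U * S) 0 (adjoint W)
      + adjoint (blockOp W (-(adjoint (U * S))) 0 (adjoint Z)) = blockOp T K (-K) T := by
    rw [blockOp_adjoint, blockOp_add, adjoint_adjoint]
    congr 1
    · rw [map_zero, add_zero, hKdef]
    · rw [← star_eq_adjoint, star_neg, star_eq_adjoint, adjoint_adjoint, zero_add, hKdef]
    · rw [hTdef, add_comm]
  rw [hM] at hU
  set M : WithLp 2 (H × H) →L[ℂ] WithLp 2 (H × H) := blockOp T K (-K) T with hMdef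
  have hMadj : adjoint M = blockOp (adjoint T) (adjoint (-K)) (adjoint K) (adjoint T) :=
    blockOp_adjoint T K (-K) T
  have hUadj : adjoint Uhat = c • adjoint M := by
    rw [hU, ← star_eq_adjoint, star_smul, hcstar, star_eq_adjoint]
  -- entry identities
  have hnegK : adjoint (-K) = -(adjoint K) := by
    rw [← star_eq_adjoint, star_neg, star_eq_adjoint]
  have e11 : adjoint T * T + adjoint (-K) * (-K) = b • 1 := by
    rw [hnegK, neg_mul_neg, hTadj, hT, hKadj, hKdef, hUlm, hUlm, hB2S2]
  have e12 : adjoint T * K + adjoint (-K) * T = 0 := by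
    rw [hnegK, neg_mul, hTadj, hT, hKadj, hKdef, hUlm, hUlm, hSB.eq, add_neg_cancel]
  have e21 : adjoint K * T + adjoint T * (-K) = 0 := by
    rw [mul_neg, hTadj, hT, hKadj, hKdef, hUlm, hUlm, hSB.eq, add_neg_cancel]
  have e22 : adjoint K * K + adjoint T * T = b • 1 := by
    rw [hTadj, hT, hKadj, hKdef, hUlm, hUlm, add_comm, hB2S2]
  have f11 : T * adjoint T + K * adjoint K = b • 1 := by
    rw [hTadj, hT, hKadj, hKdef, hUrm, hUrm, ← add_mul, ← mul_add, hB2S2,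
      mul_smul_comm, mul_one, smul_mul_assoc, hUr]
  have f12 : T * adjoint (-K) + K * adjoint T = 0 := by
    rw [hnegK, mul_neg, hTadj, hT, hKadj, hKdef, hUrm, hUrm, hSB.eq, neg_add_cancel]
  have f21 : (-K) * adjoint T + T * adjoint K = 0 := by
    rw [neg_mul, hTadj, hT, hKadj, hKdef, hUrm, hUrm, hSB.eq, neg_add_cancel]
  have f22 : (-K) * adjoint (-K) + T * adjoint T = b • 1 := by
    rw [hnegK, neg_mul_neg, hTadj, hT, hKadj, hKdef, hUrm, hUrm, ← add_mul, ← mul_add,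
      add_comm (S * S) (B * B), hB2S2, mul_smul_comm, mul_one, smul_mul_assoc, hUr]
  have hb1 : b • (1 : WithLp 2 (H × H) →L[ℂ] WithLp 2 (H × H)) = blockOp (b • 1) 0 0 (b • 1) := by
    rw [blockOp_one, blockOp_smul, smul_zero]
  constructor
  · rw [hUadj, hU, smul_mul_assoc, mul_smul_comm, smul_smul, hMadj, hMdef, blockOp_mul,
      e11, e12, e21, e22, ← hb1, smul_smul]
    rw [hcb, one_smul]
  · rw [hUadj, hU, smul_mul_assoc, mul_smul_comm, smul_smul, hMadj, hMdef, blockOp_mul,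
      f11, f12, f21, f22, ← hb1, smul_smul]
    rw [hcb, one_smul]
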